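/- Let γ ≥ 1, let V⁺, V⁻ > 0 with V⁺ ≠ V⁻, and define g(V) = ( ((V⁺V⁻)⁴/V⁴)·(h((V⁺)²) - h((V⁻)²))/((V⁺)⁴ - (V⁻)⁴) + h(V²) - ((V⁺)⁴ h((V⁺)²) - (V⁻)⁴ h((V⁻)²))/((V⁺)⁴ - (V⁻)⁴) )·V for V > 0. Then g(V⁺) = g(V⁻) = 0, g''(V) > 0 for all V > 0, and V⁺ and V⁻ are the only zeros of g on (0,∞). -/

import Mathlib

open Real

/-- Enthalpy: `h(ρ) = ln ρ` if `γ = 1`, `h(ρ) = (γ/(γ-1)) ρ^(γ-1)` if `γ > 1`. -/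
noncomputable def enth (γ ρ : ℝ) : ℝ :=
  if γ = 1 then Real.log ρ else (γ / (γ - 1)) * ρ ^ (γ - 1)

private lemma no_three_zeros {f : ℝ → ℝ} (hf : StrictConvexOn ℝ (Set.Ioi 0) f)
    {x y z : ℝ} (hx : 0 < x) (hxy : x < y) (hyz : y < z)
    (fx : f x = 0) (fy : f y = 0) (fz : f z = 0) : False := by
  have hz : (0:ℝ) < z := hx.trans (hxy.trans hyz)
  set t := (z - y) / (z - x) with ht
  have hzx : 0 < z - x := by linarith
  have ht0 : 0 < t := div_pos (by linarith) hzx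
  have ht1 : 0 < 1 - t := by
    have : t < 1 := (div_lt_one hzx).mpr (by linarith)
    linarith
  have hyeq : t • x + (1 - t) • z = y := by
    simp only [smul_eq_mul, ht]
    field_simp
    ring
  have h2 := hf.2 (Set.mem_Ioi.mpr hx) (Set.mem_Ioi.mpr hz)
      (ne_of_lt (lt_trans hxy hyz)) ht0 ht1 (by ring)
  rw [hyeq, fx, fy, fz] at h2
  simp at h2

private lemma enth_strictMono (γ : ℝ) (hγ : 1 ≤ γ) {x y : ℝ} (hx : 0 < x) (hxy : x < y) :
    enth γ x < enth γ y := by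
  unfold enth
  split
  · exact Real.log_lt_log hx hxy
  · rename_i h
    have hγ' : 1 < γ := lt_of_le_of_ne hγ (Ne.symm h)
    have hc : 0 < γ / (γ - 1) := div_pos (by linarith) (by linarith)
    exact mul_lt_mul_of_pos_left (Real.rpow_lt_rpow hx.le hxy (by linarith)) hc

/-- Properties of the nonlinear-viscosity profile nonlinearity `g`: the end states
`V⁺, V⁻` are its only positive zeros and it is strictly convex on `(0,∞)`. -/
theorem g_zeros_and_convexity
    (γ Vp Vm : ℝ) (hγ : 1 ≤ γ) (hVp : 0 < Vp) (hVm : 0 < Vm) (hne : Vp ≠ Vm)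
    (g : ℝ → ℝ)
    (hg : ∀ V : ℝ, 0 < V →
      g V = (((Vp * Vm) ^ 4 / V ^ 4) *
          ((enth γ (Vp ^ 2) - enth γ (Vm ^ 2)) / (Vp ^ 4 - Vm ^ 4)) +
          enth γ (V ^ 2) -
          (Vp ^ 4 * enth γ (Vp ^ 2) - Vm ^ 4 * enth γ (Vm ^ 2)) / (Vp ^ 4 - Vm ^ 4)) * V) :
    g Vp = 0 ∧ g Vm = 0 ∧
    (∀ V : ℝ, 0 < V → 0 < deriv (deriv g) V) ∧
    (∀ V : ℝ, 0 < V → g V = 0 → V = Vp ∨ V = Vm) := by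
  have hD : Vp ^ 4 - Vm ^ 4 ≠ 0 := by
    rcases hne.lt_or_gt with h | h
    · exact sub_ne_zero.mpr (ne_of_lt (pow_lt_pow_left₀ h hVp.le (by norm_num)))
    · exact sub_ne_zero.mpr (ne_of_gt (pow_lt_pow_left₀ h hVm.le (by norm_num)))
  set A : ℝ := (enth γ (Vp ^ 2) - enth γ (Vm ^ 2)) / (Vp ^ 4 - Vm ^ 4) with hA_def
  set B : ℝ := (Vp ^ 4 * enth γ (Vp ^ 2) - Vm ^ 4 * enth γ (Vm ^ 2)) / (Vp ^ 4 - Vm ^ 4)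
    with hB_def
  set CA : ℝ := (Vp * Vm) ^ 4 * A with hCA_def
  -- positivity of A and CA
  have hA : 0 < A := by
    rcases hne.lt_or_gt with h | h
    · apply div_pos_of_neg_of_neg
      · exact sub_neg.mpr (enth_strictMono γ hγ (pow_pos hVp 2)
          (pow_lt_pow_left₀ h hVp.le (by norm_num)))
      · exact sub_neg.mpr (pow_lt_pow_left₀ h hVp.le (by norm_num))
    · apply div_pos
      · exact sub_pos.mpr (enth_strictMono γ hγ (pow_pos hVm 2)
          (pow_lt_pow_left₀ h hVm.le (by norm_num)))
      · exact sub_pos.mpr (pow_lt_pow_left₀ h hVm.le (by norm_num))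
  have hCA : 0 < CA := mul_pos (pow_pos (mul_pos hVp hVm) 4) hA
  -- the zeros at the end states
  have gVp : g Vp = 0 := by
    rw [hg Vp hVp, hA_def, hB_def]
    field_simp
    ring
  have gVm : g Vm = 0 := by
    rw [hg Vm hVm, hA_def, hB_def]
    field_simp
    ring
  -- a smooth representative with explicit first and second derivatives
  have key : ∃ E E1 E2 : ℝ → ℝ,
      (∀ V ∈ Set.Ioi (0:ℝ), g V = E V) ∧
      (∀ V ∈ Set.Ioi (0:ℝ), HasDerivAt E (E1 V) V) ∧
      (∀ V ∈ Set.Ioi (0:ℝ), HasDerivAt E1 (E2 V) V) ∧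
      (∀ V ∈ Set.Ioi (0:ℝ), 0 < E2 V) := by
    by_cases hγ1 : γ = 1
    · refine ⟨fun V => CA/V^3 + V * Real.log (V^2) - B*V,
        fun V => -3*CA/V^4 + Real.log (V^2) + 2 - B,
        fun V => 12*CA/V^5 + 2/V, ?_, ?_, ?_, ?_⟩
      · intro V hV
        rw [Set.mem_Ioi] at hV
        rw [hg V hV, hγ1]
        have henth : enth 1 (V^2) = Real.log (V^2) := by simp [enth]
        rw [henth, hCA_def]
        field_simp
      · intro V hV
        rw [Set.mem_Ioi] at hV
        have h1 : HasDerivAt (fun V : ℝ => CA/V^3) (-3*CA/V^4) V := by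
          have := ((hasDerivAt_pow 3 V).inv (pow_ne_zero 3 hV.ne')).const_mul CA
          simp only [div_eq_mul_inv]
          refine this.congr_deriv ?_
          field_simp
          ring
        have hlog : HasDerivAt (fun V : ℝ => Real.log (V^2)) ((2*V^(2-1))/V^2) V := by
          have := (hasDerivAt_pow 2 V).log (pow_ne_zero 2 hV.ne')
          exact this.congr_deriv (by push_cast; ring)
        have h2 : HasDerivAt (fun V : ℝ => V * Real.log (V^2)) (Real.log (V^2) + 2) V := by
          have := (hasDerivAt_id V).mul hlog
          refine this.congr_deriv ?_
          simp only [id_eq]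
          field_simp
          ring
        have h3 : HasDerivAt (fun V : ℝ => B*V) B V := by
          simpa using (hasDerivAt_id V).const_mul B
        have := (h1.add h2).sub h3
        refine this.congr_deriv ?_
        ring
      · intro V hV
        rw [Set.mem_Ioi] at hV
        have h1 : HasDerivAt (fun V : ℝ => -3*CA/V^4) (12*CA/V^5) V := by
          have := ((hasDerivAt_pow 4 V).inv (pow_ne_zero 4 hV.ne')).const_mul (-3*CA)
          simp only [div_eq_mul_inv]
          refine this.congr_deriv ?_
          field_simp
          ring
        have hlog : HasDerivAt (fun V : ℝ => Real.log (V^2)) (2/V) V := by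
          have := (hasDerivAt_pow 2 V).log (pow_ne_zero 2 hV.ne')
          refine this.congr_deriv ?_
          field_simp
          ring
        have := ((h1.add hlog).add_const 2).sub_const B
        exact this
      · intro V hV
        rw [Set.mem_Ioi] at hV
        have : 0 < 12*CA/V^5 := by positivity
        have : 0 < 2/V := by positivity
        positivity
    · -- γ > 1
      have hγ' : 1 < γ := lt_of_le_of_ne hγ (Ne.symm hγ1)
      set c : ℝ := γ / (γ - 1) with hc_def
      set a : ℝ := γ - 1 with ha_def
      have hc : 0 < c := div_pos (by linarith) (by linarith)
      have ha : 0 < a := by simp only [ha_def]; linarith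
      refine ⟨fun V => CA/V^3 + c * V^(2*a+1) - B*V,
        fun V => -3*CA/V^4 + c*(2*a+1) * V^(2*a) - B,
        fun V => 12*CA/V^5 + c*(2*a+1)*(2*a) * V^(2*a-1), ?_, ?_, ?_, ?_⟩
      · intro V hV
        rw [Set.mem_Ioi] at hV
        rw [hg V hV]
        have henth : enth γ (V^2) = c * (V^2)^a := by
          rw [enth, if_neg hγ1]
        have hrpow : (V^2 : ℝ)^a * V = V^(2*a+1) := by
          rw [← Real.rpow_natCast V 2, ← Real.rpow_mul hV.le, Real.rpow_add_one hV.ne']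
          norm_num
        rw [henth, hCA_def]
        field_simp
        rw [← hrpow]
        ring
      · intro V hV
        rw [Set.mem_Ioi] at hV
        have h1 : HasDerivAt (fun V : ℝ => CA/V^3) (-3*CA/V^4) V := by
          have := ((hasDerivAt_pow 3 V).inv (pow_ne_zero 3 hV.ne')).const_mul CA
          simp only [div_eq_mul_inv]
          refine this.congr_deriv ?_
          field_simp
          ring
        have h2 : HasDerivAt (fun V : ℝ => c * V^(2*a+1)) (c*(2*a+1) * V^(2*a)) V := by
          have h := (Real.hasDerivAt_rpow_const (x := V) (p := 2*a+1)
            (Or.inl hV.ne')).const_mul c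
          rw [show 2*a+1-1 = 2*a by ring] at h
          refine h.congr_deriv ?_
          ring
        have h3 : HasDerivAt (fun V : ℝ => B*V) B V := by
          simpa using (hasDerivAt_id V).const_mul B
        exact (h1.add h2).sub h3
      · intro V hV
        rw [Set.mem_Ioi] at hV
        have h1 : HasDerivAt (fun V : ℝ => -3*CA/V^4) (12*CA/V^5) V := by
          have := ((hasDerivAt_pow 4 V).inv (pow_ne_zero 4 hV.ne')).const_mul (-3*CA)
          simp only [div_eq_mul_inv]
          refine this.congr_deriv ?_
          field_simp
          ring
        have h2 : HasDerivAt (fun V : ℝ => c*(2*a+1) * V^(2*a))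
            (c*(2*a+1)*(2*a) * V^(2*a-1)) V := by
          have h := (Real.hasDerivAt_rpow_const (x := V) (p := 2*a)
            (Or.inl hV.ne')).const_mul (c*(2*a+1))
          refine h.congr_deriv ?_
          ring
        have := (h1.add h2).sub_const B
        exact this
      · intro V hV
        rw [Set.mem_Ioi] at hV
        have hr : 0 < V^(2*a-1) := Real.rpow_pos_of_pos hV _
        have h1 : 0 < 12*CA/V^5 := by positivity
        have h2 : 0 < c*(2*a+1)*(2*a) * V^(2*a-1) := by positivity
        exact add_pos h1 h2
  obtain ⟨E, E1, E2, hgE, hE1, hE2, hEpos⟩ := key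
  have hgE' : ∀ V : ℝ, 0 < V → g =ᶠ[nhds V] E := fun V hV =>
    Filter.eventuallyEq_of_mem (isOpen_Ioi.mem_nhds (Set.mem_Ioi.mpr hV)) hgE
  have hderiv_g : ∀ V ∈ Set.Ioi (0:ℝ), deriv g V = E1 V := by
    intro V hV
    rw [(hgE' V hV).deriv_eq]
    exact (hE1 V hV).deriv
  have hderiv2 : ∀ V : ℝ, 0 < V → deriv (deriv g) V = E2 V := by
    intro V hV
    have h1 : deriv g =ᶠ[nhds V] E1 :=
      Filter.eventuallyEq_of_mem (isOpen_Ioi.mem_nhds (Set.mem_Ioi.mpr hV)) hderiv_g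
    rw [h1.deriv_eq]
    exact (hE2 V (Set.mem_Ioi.mpr hV)).deriv
  have hdiff : ∀ V ∈ Set.Ioi (0:ℝ), HasDerivAt g (E1 V) V := fun V hV =>
    (hE1 V hV).congr_of_eventuallyEq (hgE' V hV)
  have hcont : ContinuousOn g (Set.Ioi 0) := fun V hV =>
    ((hdiff V hV).differentiableAt.continuousAt).continuousWithinAt
  have hconv : StrictConvexOn ℝ (Set.Ioi 0) g := by
    apply strictConvexOn_of_deriv2_pos (convex_Ioi 0) hcont
    intro V hV
    rw [interior_Ioi] at hV
    rw [Set.mem_Ioi] at hV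
    show 0 < deriv (deriv g) V
    rw [hderiv2 V hV]
    exact hEpos V (Set.mem_Ioi.mpr hV)
  refine ⟨gVp, gVm, fun V hV => by rw [hderiv2 V hV]; exact hEpos V (Set.mem_Ioi.mpr hV), ?_⟩
  intro V hV hgV
  by_contra hcon
  push_neg at hcon
  obtain ⟨hVnp, hVnm⟩ := hcon
  rcases hVnp.lt_or_gt with h1 | h1 <;> rcases hVnm.lt_or_gt with h2 | h2 <;>
    rcases hne.lt_or_gt with h3 | h3
  · exact no_three_zeros hconv hV h1 h3 hgV gVp gVm
  · exact no_three_zeros hconv hV h2 h3 hgV gVm gVp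
  · linarith
  · exact no_three_zeros hconv hVm h2 h1 gVm hgV gVp
  · exact no_three_zeros hconv hVp h1 h2 gVp hgV gVm
  · linarith
  · exact no_three_zeros hconv hVp h3 h2 gVp gVm hgV
  · exact no_three_zeros hconv hVm h3 h1 gVm gVp hgV
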